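/- Let m ≥ 2, L ≥ 0, and δ ≥ m be natural numbers, and define f : ℕ → ℕ by f(x) = x if x ≤ L and f(x) = x − (δ − (m − 1)) if x ≥ L + δ. Then for all finite multisets A and B of natural numbers, each of cardinality at most m − 1 (counted with multiplicity) and each of whose elements is either ≤ L or ≥ L + δ: Σ_{a ∈ A} 2^a ≤ Σ_{b ∈ B} 2^b if and only if Σ_{a ∈ A} 2^{f(a)} ≤ Σ_{b ∈ B} 2^{f(b)}. -/

import Mathlib

/-- Comparison of `H + l` vs `H' + l'` when `q ∣ H, H'` and `l, l' < q`. -/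
lemma stmt13_comp (q H H' l l' : ℕ) (dH : q ∣ H) (dH' : q ∣ H')
    (hl : l < q) (hl' : l' < q) :
    H + l ≤ H' + l' ↔ (H < H' ∨ (H = H' ∧ l ≤ l')) := by
  obtain ⟨k, rfl⟩ := dH
  obtain ⟨k', rfl⟩ := dH'
  have hq : 0 < q := by omega
  constructor
  · intro h
    rcases lt_trichotomy k k' with h1 | h1 | h1
    · left; exact (Nat.mul_lt_mul_left hq).mpr h1
    · subst h1; right; exact ⟨rfl, by omega⟩
    · exfalso
      have : q * (k' + 1) ≤ q * k := Nat.mul_le_mul_left q h1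
      rw [Nat.mul_add, Nat.mul_one] at this
      omega
  · rintro (h1 | ⟨h1, h2⟩)
    · have hk : k + 1 ≤ k' := by
        have := Nat.lt_of_mul_lt_mul_left (a := q) h1; omega
      have : q * (k + 1) ≤ q * k' := Nat.mul_le_mul_left q hk
      rw [Nat.mul_add, Nat.mul_one] at this
      omega
    · omega

/-- Compressing exponents: for `m ≥ 2`, `δ ≥ m` and `f(x) = x` on `x ≤ L`,
`f(x) = x − (δ − (m − 1))` on `x ≥ L + δ`, the comparison of `Σ 2^a` over two multisets
of at most `m − 1` exponents, each exponent being `≤ L` or `≥ L + δ`, is unchanged when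
every exponent `a` is replaced by `f(a)`. -/
theorem stmt13 (m L δ : ℕ) (hm : 2 ≤ m) (hδ : m ≤ δ)
    (f : ℕ → ℕ)
    (hf1 : ∀ x : ℕ, x ≤ L → f x = x)
    (hf2 : ∀ x : ℕ, L + δ ≤ x → f x = x - (δ - (m - 1)))
    (A B : Multiset ℕ)
    (hA : Multiset.card A ≤ m - 1) (hB : Multiset.card B ≤ m - 1)
    (hAel : ∀ a ∈ A, a ≤ L ∨ L + δ ≤ a) (hBel : ∀ b ∈ B, b ≤ L ∨ L + δ ≤ b) :
    ((A.map fun a => 2 ^ a).sum ≤ (B.map fun b => 2 ^ b).sum ↔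
      (A.map fun a => 2 ^ (f a)).sum ≤ (B.map fun b => 2 ^ (f b)).sum) := by
  set c := δ - (m - 1) with hc
  -- pieces
  set p : ℕ → Prop := fun a => a ≤ L with hp
  have hdp : DecidablePred p := fun a => inferInstanceAs (Decidable (a ≤ L))
  classical
  -- split lemma
  have split : ∀ (S : Multiset ℕ) (g : ℕ → ℕ),
      (S.map g).sum = ((S.filter p).map g).sum + ((S.filter (fun a => ¬ p a)).map g).sum := by
    intro S g
    conv_lhs => rw [← Multiset.filter_add_not p S]
    rw [Multiset.map_add, Multiset.sum_add]
  -- low sums bounded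
  have lobound : ∀ S : Multiset ℕ, Multiset.card S ≤ m - 1 →
      ((S.filter p).map fun a => 2 ^ a).sum < 2 ^ (L + (m - 1)) := by
    intro S hS
    have h1 : ((S.filter p).map fun a => 2 ^ a).sum ≤
        Multiset.card ((S.filter p).map fun a => 2 ^ a) • 2 ^ L := by
      apply Multiset.sum_le_card_nsmul
      intro x hx
      obtain ⟨a, ha, rfl⟩ := Multiset.mem_map.mp hx
      exact Nat.pow_le_pow_right (by norm_num) (Multiset.mem_filter.mp ha).2
    rw [Multiset.card_map, smul_eq_mul] at h1
    have h2 : Multiset.card (S.filter p) ≤ m - 1 :=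
      le_trans (Multiset.card_le_card (Multiset.filter_le p S)) hS
    have h3 : (m - 1) * 2 ^ L < 2 ^ (m - 1) * 2 ^ L := by
      exact (Nat.mul_lt_mul_right (pow_pos (by norm_num) L)).mpr (Nat.lt_two_pow_self (n := m - 1))
    calc ((S.filter p).map fun a => 2 ^ a).sum ≤ (m-1) * 2 ^ L :=
          le_trans h1 (Nat.mul_le_mul_right _ h2)
      _ < 2 ^ (m-1) * 2 ^ L := h3
      _ = 2 ^ (L + (m-1)) := by rw [← pow_add, Nat.add_comm]
  -- low parts invariant under f
  have lofix : ∀ S : Multiset ℕ,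
      ((S.filter p).map fun a => 2 ^ (f a)).sum = ((S.filter p).map fun a => 2 ^ a).sum := by
    intro S
    congr 1
    apply Multiset.map_congr rfl
    intro a ha
    rw [hf1 a (Multiset.mem_filter.mp ha).2]
  -- high parts: divisibility and relation
  have hidvd : ∀ S : Multiset ℕ, (∀ a ∈ S, a ≤ L ∨ L + δ ≤ a) →
      (2 : ℕ) ^ (L + δ) ∣ ((S.filter (fun a => ¬ p a)).map fun a => 2 ^ a).sum := by
    intro S hSel
    apply Multiset.dvd_sum
    intro x hx
    obtain ⟨a, ha, rfl⟩ := Multiset.mem_map.mp hx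
    obtain ⟨haS, hanp⟩ := Multiset.mem_filter.mp ha
    have : L + δ ≤ a := (hSel a haS).resolve_left hanp
    exact pow_dvd_pow 2 this
  have hirel : ∀ S : Multiset ℕ, (∀ a ∈ S, a ≤ L ∨ L + δ ≤ a) →
      ((S.filter (fun a => ¬ p a)).map fun a => 2 ^ a).sum
        = 2 ^ c * ((S.filter (fun a => ¬ p a)).map fun a => 2 ^ (f a)).sum := by
    intro S hSel
    rw [← Multiset.sum_map_mul_left]
    apply congrArg
    apply Multiset.map_congr rfl
    intro a ha
    obtain ⟨haS, hanp⟩ := Multiset.mem_filter.mp ha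
    have hge : L + δ ≤ a := (hSel a haS).resolve_left hanp
    rw [hf2 a hge, ← pow_add]
    congr 1
    omega
  have hifdvd : ∀ S : Multiset ℕ, (∀ a ∈ S, a ≤ L ∨ L + δ ≤ a) →
      (2 : ℕ) ^ (L + (m - 1)) ∣ ((S.filter (fun a => ¬ p a)).map fun a => 2 ^ (f a)).sum := by
    intro S hSel
    apply Multiset.dvd_sum
    intro x hx
    obtain ⟨a, ha, rfl⟩ := Multiset.mem_map.mp hx
    obtain ⟨haS, hanp⟩ := Multiset.mem_filter.mp ha
    have hge : L + δ ≤ a := (hSel a haS).resolve_left hanp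
    rw [hf2 a hge]
    exact pow_dvd_pow 2 (by omega)
  -- abbreviations
  set lA := ((A.filter p).map fun a => 2 ^ a).sum with hlA
  set lB := ((B.filter p).map fun a => 2 ^ a).sum with hlB
  set HA := ((A.filter (fun a => ¬ p a)).map fun a => 2 ^ a).sum with hHA
  set HB := ((B.filter (fun a => ¬ p a)).map fun a => 2 ^ a).sum with hHB
  set HA' := ((A.filter (fun a => ¬ p a)).map fun a => 2 ^ (f a)).sum with hHA'
  set HB' := ((B.filter (fun a => ¬ p a)).map fun a => 2 ^ (f a)).sum with hHB'
  have e1 : (A.map fun a => 2 ^ a).sum = HA + lA := by rw [split, Nat.add_comm]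
  have e2 : (B.map fun b => 2 ^ b).sum = HB + lB := by rw [split, Nat.add_comm]
  have e3 : (A.map fun a => 2 ^ (f a)).sum = HA' + lA := by
    rw [split, Nat.add_comm, lofix]
  have e4 : (B.map fun b => 2 ^ (f b)).sum = HB' + lB := by
    rw [split, Nat.add_comm, lofix]
  have hlAlt : lA < 2 ^ (L + (m - 1)) := lobound A hA
  have hlBlt : lB < 2 ^ (L + (m - 1)) := lobound B hB
  have hmono : (2:ℕ) ^ (L + (m-1)) ≤ 2 ^ (L + δ) := Nat.pow_le_pow_right (by norm_num) (by omega)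
  rw [e1, e2, e3, e4,
    stmt13_comp _ _ _ _ _ (hidvd A hAel) (hidvd B hBel) (lt_of_lt_of_le hlAlt hmono)
      (lt_of_lt_of_le hlBlt hmono),
    stmt13_comp _ _ _ _ _ (hifdvd A hAel) (hifdvd B hBel) hlAlt hlBlt]
  have hApos : 0 < (2:ℕ) ^ c := pow_pos (by norm_num) c
  rw [hirel A hAel, hirel B hBel]
  constructor
  · rintro (h | ⟨h, h2⟩)
    · left; exact Nat.lt_of_mul_lt_mul_left h
    · right; exact ⟨Nat.eq_of_mul_eq_mul_left hApos h, h2⟩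
  · rintro (h | ⟨h, h2⟩)
    · left; exact (Nat.mul_lt_mul_left hApos).mpr h
    · right; exact ⟨by rw [h], h2⟩
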